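/- Let u : P → Q be a Kummer homomorphism of saturated commutative monoids and write G = Q^gp/P^gp, with x̄ ∈ G the class of x ∈ Q. For every n ≥ 0 and 0 ≤ k ≤ n+1, define monoid homomorphisms b_k^n : Q ⊕ G^n → Q ⊕ G^{n+1} by b_0^n(x_0, x_1, …, x_n) = (x_0, x̄_0 − x_1 − ⋯ − x_n, x_1, …, x_n) and, for 1 ≤ k ≤ n+1, b_k^n(x_0, x_1, …, x_n) = (x_0, x_1, …, x_{k−1}, 0, x_k, …, x_n). Then the maps ∂^n := Σ_{k=0}^{n+1} (−1)^k ℤ[b_k^n] : ℤ[Q ⊕ G^n] → ℤ[Q ⊕ G^{n+1}] satisfy ∂^{n+1} ∘ ∂^n = 0, so that C := (ℤ[Q ⊕ G^n], ∂^n)_{n ≥ 0} is a cochain complex of abelian groups (with C^0 = ℤ[Q]), and the chain map from the complex consisting of ℤ[P] concentrated in degree 0 to C that is ℤ[u] : ℤ[P] → ℤ[Q] in degree 0 is a chain homotopy equivalence. -/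

import Mathlib

attribute [local instance] Classical.propDecidable


noncomputable section

variable {P Q GP GQ : Type*} [AddCancelCommMonoid P] [AddCancelCommMonoid Q]
  [AddCommGroup GP] [AddCommGroup GQ]

/-! ### Auxiliary `Fin`-tuple lemmas -/

lemma NiziolAux.succAbove_comm (n : ℕ) (i j : Fin (n+1)) (h : i ≤ j) (k : Fin n) :
    j.succ.succAbove (i.succAbove k) = i.castSucc.succAbove (j.succAbove k) := by
  rcases i with ⟨i, hi⟩; rcases j with ⟨j, hj⟩; rcases k with ⟨k, hk⟩
  simp only [Fin.succAbove, Fin.lt_def, Fin.ext_iff, Fin.le_def] at *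
  split_ifs <;>
    simp_all [Fin.ext_iff, Fin.lt_def, Fin.succ, Fin.castSucc, Fin.castAdd, Fin.castLE] <;>
    omega

lemma NiziolAux.insertNth_comm {β : Type*} {n : ℕ} (i j : Fin (n+1)) (h : i ≤ j) (x y : β)
    (v : Fin n → β) :
    Fin.insertNth (α := fun _ => β) j.succ y (Fin.insertNth (α := fun _ => β) i x v) =
      Fin.insertNth (α := fun _ => β) i.castSucc x (Fin.insertNth (α := fun _ => β) j y v) := by
  rw [Fin.eq_insertNth_iff]
  constructor
  · have hia : i.castSucc = j.succ.succAbove i := by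
      rw [Fin.succAbove_of_castSucc_lt]
      exact lt_of_le_of_lt (Fin.castSucc_le_castSucc_iff.mpr h) Fin.castSucc_lt_succ
    rw [hia, Fin.insertNth_apply_succAbove, Fin.insertNth_apply_same]
  · funext m
    show (Fin.insertNth (α := fun _ => β) j.succ y (Fin.insertNth (α := fun _ => β) i x v))
      (i.castSucc.succAbove m) = _
    induction m using Fin.succAboveCases with
    | i => exact j
    | x =>
      have hja : i.castSucc.succAbove j = j.succ :=
        Fin.succAbove_of_le_castSucc _ _ (Fin.castSucc_le_castSucc_iff.mpr h)
      rw [hja, Fin.insertNth_apply_same, Fin.insertNth_apply_same]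
    | p t =>
      rw [← NiziolAux.succAbove_comm n i j h t, Fin.insertNth_apply_succAbove,
        Fin.insertNth_apply_succAbove, Fin.insertNth_apply_succAbove]

lemma NiziolAux.insertNth_succ_cons {β : Type*} {n : ℕ} (t : Fin (n+1)) (c y : β)
    (v : Fin n → β) :
    Fin.insertNth (α := fun _ => β) t.succ y (Fin.cons c v) =
      Fin.cons c (Fin.insertNth (α := fun _ => β) t y v) := by
  rw [← Fin.insertNth_zero', ← Fin.insertNth_zero',
    NiziolAux.insertNth_comm 0 t (Fin.zero_le t) c y v]
  rfl

lemma NiziolAux.sum_insertNth {β : Type*} [AddCommMonoid β] {n : ℕ} (p : Fin (n+1)) (y : β)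
    (v : Fin n → β) :
    ∑ i, Fin.insertNth (α := fun _ => β) p y v i = y + ∑ i, v i := by
  rw [Fin.sum_univ_succAbove _ p, Fin.insertNth_apply_same]
  congr 1
  exact Finset.sum_congr rfl fun i _ =>
    Fin.insertNth_apply_succAbove (α := fun _ => β) p y v i

lemma NiziolAux.tail_insertNth_succ {β : Type*} {n : ℕ} (t : Fin (n+1)) (y : β)
    (v : Fin (n+1) → β) :
    Fin.tail (Fin.insertNth (α := fun _ => β) t.succ y v) =
      Fin.insertNth (α := fun _ => β) t y (Fin.tail v) := by
  have h : v = Fin.cons (v 0) (Fin.tail v) := (Fin.cons_self_tail v).symm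
  rw [h, NiziolAux.insertNth_succ_cons, Fin.tail_cons, Fin.tail_cons]

/-- The coface maps `b_k^n : Q ⊕ G^n → Q ⊕ G^{n+1}` (where `G = Q^gp/P^gp`):
`b_0^n (x_0, x_1, …, x_n) = (x_0, x̄_0 − x_1 − ⋯ − x_n, x_1, …, x_n)` and, for
`1 ≤ k ≤ n + 1`, `b_k^n (x_0, x_1, …, x_n) = (x_0, x_1, …, x_{k−1}, 0, x_k, …, x_n)`. -/
def cofaceMap (ιQ : Q →+ GQ) (ugp : GP →+ GQ) (n : ℕ) (k : Fin (n + 2)) :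
    Q × (Fin n → GQ ⧸ ugp.range) → Q × (Fin (n + 1) → GQ ⧸ ugp.range) :=
  Fin.cases
    (fun x => (x.1,
      Fin.cons (QuotientAddGroup.mk' ugp.range (ιQ x.1) - ∑ i, x.2 i) x.2))
    (fun j x => (x.1, j.insertNth 0 x.2))
    k

/-- The alternating-sum differential `∂^n = Σ_{k=0}^{n+1} (−1)^k ℤ[b_k^n]` on the monoid
algebra `ℤ[Q ⊕ G^n]` (whose underlying abelian group is `(Q × (Fin n → G)) →₀ ℤ`). -/
def cofaceDiff (ιQ : Q →+ GQ) (ugp : GP →+ GQ) (n : ℕ) :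
    ((Q × (Fin n → GQ ⧸ ugp.range)) →₀ ℤ) →+
      ((Q × (Fin (n + 1) → GQ ⧸ ugp.range)) →₀ ℤ) :=
  ∑ k : Fin (n + 2),
    ((-1 : ℤ) ^ (k : ℕ)) • Finsupp.mapDomain.addMonoidHom (cofaceMap ιQ ugp n k)

/-- The degree-zero map `ℤ[u] : ℤ[P] → ℤ[Q] = ℤ[Q ⊕ G^0]`. -/
def cofaceAug (u : P →+ Q) (ugp : GP →+ GQ) :
    (P →₀ ℤ) →+ ((Q × (Fin 0 → GQ ⧸ ugp.range)) →₀ ℤ) :=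
  Finsupp.mapDomain.addMonoidHom (fun x => (u x, 0))

namespace NiziolAux

variable (ιQ : Q →+ GQ) (ugp : GP →+ GQ)

lemma cofaceMap_zero (n : ℕ) (a : Q × (Fin n → GQ ⧸ ugp.range)) :
    cofaceMap ιQ ugp n 0 a =
      (a.1, Fin.cons (QuotientAddGroup.mk' ugp.range (ιQ a.1) - ∑ i, a.2 i) a.2) := by
  simp only [cofaceMap, Fin.cases_zero]

lemma cofaceMap_succ (n : ℕ) (j : Fin (n + 1)) (a : Q × (Fin n → GQ ⧸ ugp.range)) :
    cofaceMap ιQ ugp n j.succ a = (a.1, j.insertNth 0 a.2) := by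
  simp only [cofaceMap, Fin.cases_succ]

lemma coface_comm (n : ℕ) (i j : Fin (n + 2)) (h : i ≤ j)
    (a : Q × (Fin n → GQ ⧸ ugp.range)) :
    cofaceMap ιQ ugp (n + 1) j.succ (cofaceMap ιQ ugp n i a) =
      cofaceMap ιQ ugp (n + 1) i.castSucc (cofaceMap ιQ ugp n j a) := by
  obtain ⟨x, v⟩ := a
  induction i using Fin.cases with
  | zero =>
    rw [show (0 : Fin (n+2)).castSucc = (0 : Fin (n+3)) from rfl, cofaceMap_zero]
    induction j using Fin.cases with
    | zero =>
      rw [cofaceMap_zero, cofaceMap_succ, cofaceMap_zero]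
      refine congrArg _ ?_
      rw [Fin.insertNth_zero', Fin.sum_cons]
      simp only [sub_add_cancel, sub_self]
    | succ t =>
      rw [cofaceMap_zero, cofaceMap_succ, cofaceMap_succ]
      refine congrArg _ ?_
      rw [insertNth_succ_cons, sum_insertNth, zero_add]
  | succ s =>
    obtain ⟨t, rfl⟩ : ∃ t : Fin (n + 1), j = t.succ := by
      refine ⟨j.pred ?_, (Fin.succ_pred _ _).symm⟩
      rintro rfl; exact absurd h (by simp [Fin.le_def])
    rw [cofaceMap_succ, cofaceMap_succ, cofaceMap_succ, ← Fin.succ_castSucc,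
      cofaceMap_succ]
    have hst : s ≤ t := by rwa [Fin.succ_le_succ_iff] at h
    exact congrArg _ (insertNth_comm s t hst 0 0 v)

lemma cofaceDiff_single (n : ℕ) (a : Q × (Fin n → GQ ⧸ ugp.range)) :
    cofaceDiff ιQ ugp n (Finsupp.single a 1) =
      ∑ k : Fin (n + 2), ((-1 : ℤ) ^ (k : ℕ)) •
        Finsupp.single (cofaceMap ιQ ugp n k a) (1 : ℤ) := by
  rw [cofaceDiff, AddMonoidHom.finset_sum_apply]
  refine Finset.sum_congr rfl fun k _ => ?_
  rw [AddMonoidHom.smul_apply, Finsupp.mapDomain.addMonoidHom_apply, Finsupp.mapDomain_single]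

lemma ext_single_one {α β : Type*} [AddCommGroup β] {f g : (α →₀ ℤ) →+ β}
    (h : ∀ a, f (Finsupp.single a 1) = g (Finsupp.single a 1)) : f = g := by
  apply Finsupp.addHom_ext; intro a z
  have hz : Finsupp.single a z = z • Finsupp.single a (1 : ℤ) := by
    rw [Finsupp.smul_single, smul_eq_mul, mul_one]
  rw [hz, map_zsmul, map_zsmul, h]

lemma d_squared_zero (n : ℕ) :
    (cofaceDiff ιQ ugp (n + 1)).comp (cofaceDiff ιQ ugp n) = 0 := by
  apply ext_single_one
  intro a
  rw [AddMonoidHom.comp_apply, cofaceDiff_single, map_sum, AddMonoidHom.zero_apply]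
  have hrow : ∀ k : Fin (n + 2),
      cofaceDiff ιQ ugp (n+1)
          (((-1 : ℤ) ^ (k : ℕ)) • Finsupp.single (cofaceMap ιQ ugp n k a) 1)
      = ∑ j : Fin (n + 3), ((-1 : ℤ) ^ ((k : ℕ) + (j : ℕ))) •
          Finsupp.single (cofaceMap ιQ ugp (n+1) j (cofaceMap ιQ ugp n k a)) (1 : ℤ) := by
    intro k
    rw [map_zsmul, cofaceDiff_single, Finset.smul_sum]
    refine Finset.sum_congr rfl fun j _ => ?_
    rw [smul_smul, ← pow_add]
  rw [Finset.sum_congr rfl fun k _ => hrow k, ← Finset.sum_product']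
  let T : Fin (n+2) × Fin (n+3) → ((Q × (Fin (n + 2) → GQ ⧸ ugp.range)) →₀ ℤ) :=
    fun p => ((-1 : ℤ) ^ ((p.1 : ℕ) + (p.2 : ℕ))) •
      Finsupp.single (cofaceMap ιQ ugp (n+1) p.2 (cofaceMap ιQ ugp n p.1 a)) (1 : ℤ)
  show ∑ p : Fin (n+2) × Fin (n+3), T p = 0
  let S := Finset.univ.filter fun p : Fin (n+2) × Fin (n+3) => (p.2 : ℕ) ≤ (p.1 : ℕ)
  rw [← Finset.sum_add_sum_compl S, ← eq_neg_iff_add_eq_zero, ← Finset.sum_neg_distrib]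
  refine Finset.sum_bij (fun p hp =>
    (Fin.castLT p.2 (lt_of_le_of_lt (Finset.mem_filter.mp hp).right (Fin.is_lt p.1)),
      p.1.succ)) ?_ ?_ ?_ ?_
  · intro p hp
    simp only [S, Finset.mem_univ, Finset.compl_filter, Finset.mem_filter, true_and,
      Fin.val_succ, Fin.coe_castLT] at hp ⊢
    omega
  · rintro ⟨i, j⟩ hij ⟨i', j'⟩ hij' hh
    rw [Prod.mk.injEq] at hh ⊢
    obtain ⟨h1, h2⟩ := hh
    refine ⟨Fin.succ_injective _ h2, ?_⟩
    have : (j : ℕ) = (j' : ℕ) := by simpa [Fin.ext_iff] using h1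
    exact Fin.ext this
  · rintro ⟨i', j'⟩ hij'
    simp only [S, Finset.compl_filter, not_le, Finset.mem_filter, Finset.mem_univ,
      true_and] at hij'
    have hj' : j' ≠ 0 := by rintro rfl; simp at hij'
    refine ⟨(j'.pred hj', Fin.castSucc i'), ?_, ?_⟩
    · simp only [S, Finset.mem_filter, Finset.mem_univ, true_and, Fin.coe_castSucc,
        Fin.coe_pred]
      omega
    · simp only [Fin.castLT_castSucc, Fin.succ_pred]
  · rintro ⟨k, j⟩ hp
    simp only [S, Finset.mem_filter, Finset.mem_univ, true_and] at hp
    have hle : (Fin.castLT j (lt_of_le_of_lt hp (Fin.is_lt k)) : Fin (n+2)) ≤ k := by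
      simpa [Fin.le_def] using hp
    have key := coface_comm ιQ ugp n _ k hle a
    simp only [T, Fin.val_succ, Fin.coe_castLT]
    rw [key, Fin.castSucc_castLT, ← neg_smul]
    congr 1
    rw [pow_add, pow_add, pow_add, pow_one]
    ring

end NiziolAux

/-- The contracting homotopy `s^n : ℤ[Q ⊕ G^{n+1}] → ℤ[Q ⊕ G^n]`. -/
def contractS (ιQ : Q →+ GQ) (ugp : GP →+ GQ) (n : ℕ) :
    ((Q × (Fin (n + 1) → GQ ⧸ ugp.range)) →₀ ℤ) →+
      ((Q × (Fin n → GQ ⧸ ugp.range)) →₀ ℤ) :=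
  Finsupp.liftAddHom fun a => zmultiplesHom _
    (if (∑ i, a.2 i) = QuotientAddGroup.mk' ugp.range (ιQ a.1) then
      Finsupp.single (a.1, Fin.tail a.2) (1 : ℤ) else 0)

lemma contractS_single (ιQ : Q →+ GQ) (ugp : GP →+ GQ) (n : ℕ)
    (a : Q × (Fin (n+1) → GQ ⧸ ugp.range)) :
    contractS ιQ ugp n (Finsupp.single a 1) =
      (if (∑ i, a.2 i) = QuotientAddGroup.mk' ugp.range (ιQ a.1) then
        Finsupp.single (a.1, Fin.tail a.2) (1 : ℤ) else 0) := by
  rw [contractS, Finsupp.liftAddHom_apply_single, zmultiplesHom_apply, one_smul]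

/-- The chain-homotopy inverse `g : ℤ[Q ⊕ G^0] → ℤ[P]`. -/
def contractG (u : P →+ Q) (ugp : GP →+ GQ) :
    ((Q × (Fin 0 → GQ ⧸ ugp.range)) →₀ ℤ) →+ (P →₀ ℤ) :=
  Finsupp.liftAddHom fun a => zmultiplesHom _
    (if h : ∃ p : P, u p = a.1 then Finsupp.single h.choose (1 : ℤ) else 0)

lemma contractG_single (u : P →+ Q) (ugp : GP →+ GQ)
    (a : Q × (Fin 0 → GQ ⧸ ugp.range)) :
    contractG u ugp (Finsupp.single a 1) =
      (if h : ∃ p : P, u p = a.1 then Finsupp.single h.choose (1 : ℤ) else 0) := by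
  rw [contractG, Finsupp.liftAddHom_apply_single, zmultiplesHom_apply, one_smul]

open NiziolAux

/-- Nizioł's contraction.  Let `u : P → Q` be a Kummer homomorphism of
saturated commutative monoids, with group completions `ιP, ιQ` and induced map
`ugp : GP →+ GQ`; write `G = Q^gp/P^gp`.  Then the alternating sums
`∂^n = Σ (−1)^k ℤ[b_k^n]` satisfy `∂^{n+1} ∘ ∂^n = 0`, so that
`C = (ℤ[Q ⊕ G^n], ∂^n)` is a cochain complex of abelian groups, and the chain map from
`ℤ[P]` concentrated in degree `0` to `C` given in degree `0` by `ℤ[u]` is a chain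
homotopy equivalence: there is a chain-homotopy inverse `g` (necessarily satisfying
`g ∘ f = id` strictly, since the source is concentrated in degree `0` in nonnegative
cohomological degrees) together with a homotopy `s` witnessing `id ≃ f ∘ g`. -/
theorem niziol_contraction_chain_homotopy_equivalence
    (ιP : P →+ GP) (ιQ : Q →+ GQ)
    (hιP : Function.Injective ιP) (hιQ : Function.Injective ιQ)
    (hgpP : ∀ g : GP, ∃ a b : P, g = ιP a - ιP b)
    (hgpQ : ∀ g : GQ, ∃ a b : Q, g = ιQ a - ιQ b)
    (hsatP : ∀ g : GP, ∀ n : ℕ, 0 < n → (∃ a : P, n • g = ιP a) → ∃ a : P, g = ιP a)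
    (hsatQ : ∀ g : GQ, ∀ n : ℕ, 0 < n → (∃ a : Q, n • g = ιQ a) → ∃ a : Q, g = ιQ a)
    (u : P →+ Q) (huinj : Function.Injective u)
    (hkummer : ∀ q : Q, ∃ n : ℕ, 0 < n ∧ ∃ x : P, n • q = u x)
    (ugp : GP →+ GQ) (hugp : ∀ x : P, ugp (ιP x) = ιQ (u x)) :
    (∀ n : ℕ, (cofaceDiff ιQ ugp (n + 1)).comp (cofaceDiff ιQ ugp n) = 0) ∧
    (cofaceDiff ιQ ugp 0).comp (cofaceAug u ugp) = 0 ∧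
    ∃ (g : ((Q × (Fin 0 → GQ ⧸ ugp.range)) →₀ ℤ) →+ (P →₀ ℤ))
      (s : ∀ n : ℕ, ((Q × (Fin (n + 1) → GQ ⧸ ugp.range)) →₀ ℤ) →+
        ((Q × (Fin n → GQ ⧸ ugp.range)) →₀ ℤ)),
      g.comp (cofaceAug u ugp) = AddMonoidHom.id _ ∧
      (cofaceAug u ugp).comp g + (s 0).comp (cofaceDiff ιQ ugp 0) =
        AddMonoidHom.id _ ∧
      ∀ n : ℕ, (s (n + 1)).comp (cofaceDiff ιQ ugp (n + 1)) +
        (cofaceDiff ιQ ugp n).comp (s n) = AddMonoidHom.id _ := by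
  -- `ugp` is injective
  have hugpinj : Function.Injective ugp := by
    intro y z hyz
    obtain ⟨a, b, hy⟩ := hgpP y
    obtain ⟨c, d, hz⟩ := hgpP z
    rw [hy, hz, map_sub, map_sub, hugp, hugp, hugp, hugp] at hyz
    have h2 : a + d = c + b := by
      apply huinj; apply hιQ
      rw [map_add, map_add, map_add, map_add]
      exact sub_eq_sub_iff_add_eq_add.mp hyz
    have h3 : ιP (a + d) = ιP (c + b) := congrArg ιP h2
    rw [map_add, map_add] at h3
    rw [hy, hz]
    rw [sub_eq_sub_iff_add_eq_add]
    exact h3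
  -- classes of elements in the image of `u` vanish
  have h0 : ∀ p : P, QuotientAddGroup.mk' ugp.range (ιQ (u p)) = 0 := fun p => by
    rw [← hugp]
    exact (QuotientAddGroup.eq_zero_iff _).mpr ⟨ιP p, rfl⟩
  -- section: vanishing class means being in the image of `u`
  have hsect : ∀ q : Q, QuotientAddGroup.mk' ugp.range (ιQ q) = 0 → ∃ p : P, u p = q := by
    intro q hq
    obtain ⟨y, hy⟩ := (QuotientAddGroup.eq_zero_iff _).mp hq
    obtain ⟨n, hn, p0, hp0⟩ := hkummer q
    have hny : ugp (n • y) = ugp (ιP p0) := by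
      rw [map_nsmul, hy, ← map_nsmul, hp0, hugp]
    obtain ⟨p, hp⟩ := hsatP y n hn ⟨p0, hugpinj hny⟩
    refine ⟨p, hιQ ?_⟩
    rw [← hugp, ← hp, hy]
  refine ⟨d_squared_zero ιQ ugp, ?_, contractG u ugp, contractS ιQ ugp, ?_, ?_, ?_⟩
  · -- ∂⁰ ∘ ℤ[u] = 0
    apply ext_single_one
    intro p
    rw [AddMonoidHom.comp_apply, AddMonoidHom.zero_apply, cofaceAug,
      Finsupp.mapDomain.addMonoidHom_apply, Finsupp.mapDomain_single,
      cofaceDiff_single, Fin.sum_univ_two]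
    have e : cofaceMap ιQ ugp 0 0 ((u p, 0) : Q × (Fin 0 → GQ ⧸ ugp.range)) =
        cofaceMap ιQ ugp 0 1 ((u p, 0) : Q × (Fin 0 → GQ ⧸ ugp.range)) := by
      rw [cofaceMap_zero, show (1 : Fin 2) = (0 : Fin 1).succ from rfl, cofaceMap_succ]
      refine congrArg _ ?_
      rw [Fin.insertNth_zero']
      congr 1
      rw [h0 p]
      simp
    rw [e]
    simp
  · -- g ∘ ℤ[u] = id
    apply ext_single_one
    intro p
    rw [AddMonoidHom.comp_apply, AddMonoidHom.id_apply, cofaceAug,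
      Finsupp.mapDomain.addMonoidHom_apply, Finsupp.mapDomain_single, contractG_single]
    have hex : ∃ p' : P, u p' = ((u p, (0 : Fin 0 → GQ ⧸ ugp.range)) : Q × _).1 := ⟨p, rfl⟩
    rw [dif_pos hex]
    exact congrArg (fun t => Finsupp.single t 1) (huinj hex.choose_spec)
  · -- ℤ[u] ∘ g + s⁰ ∘ ∂⁰ = id
    apply ext_single_one
    rintro ⟨q, w⟩
    rw [AddMonoidHom.add_apply, AddMonoidHom.comp_apply, AddMonoidHom.comp_apply,
      AddMonoidHom.id_apply, contractG_single]
    have hd : (contractS ιQ ugp 0) (cofaceDiff ιQ ugp 0 (Finsupp.single (q, w) 1)) =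
        Finsupp.single ((q, w) : Q × (Fin 0 → GQ ⧸ ugp.range)) 1 -
          (if (0 : GQ ⧸ ugp.range) = QuotientAddGroup.mk' ugp.range (ιQ q) then
            Finsupp.single ((q, w) : Q × (Fin 0 → GQ ⧸ ugp.range)) 1 else 0) := by
      rw [cofaceDiff_single, map_sum, Fin.sum_univ_two, map_zsmul, map_zsmul,
        cofaceMap_zero, show (1 : Fin 2) = (0 : Fin 1).succ from rfl, cofaceMap_succ,
        contractS_single, contractS_single]
      dsimp only
      simp only [Fin.sum_univ_succ, Fin.sum_univ_zero, Fin.cons_zero, add_zero, zero_add,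
        sub_zero, Fin.tail_cons, Fin.insertNth_zero', Fin.val_zero, pow_zero, one_smul,
        Fin.val_succ, pow_one, neg_smul, eq_self_iff_true, if_true]
      abel
    rw [hd]
    dsimp only
    by_cases hq : QuotientAddGroup.mk' ugp.range (ιQ q) = 0
    · obtain hex := hsect q hq
      rw [dif_pos hex, if_pos hq.symm]
      have hqw : ((u hex.choose, (0 : Fin 0 → GQ ⧸ ugp.range)) : Q × _) = (q, w) := by
        rw [hex.choose_spec]
        exact congrArg _ (Subsingleton.elim _ _)
      rw [cofaceAug, Finsupp.mapDomain.addMonoidHom_apply, Finsupp.mapDomain_single, hqw]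
      abel
    · have hnex : ¬∃ p : P, u p = q := fun ⟨p, hp⟩ => hq (hp ▸ h0 p)
      rw [dif_neg hnex, if_neg (fun h => hq h.symm), map_zero]
      abel
  · -- homotopy identity in positive degrees
    intro n
    apply ext_single_one
    rintro ⟨x, v⟩
    rw [AddMonoidHom.add_apply, AddMonoidHom.comp_apply, AddMonoidHom.comp_apply,
      AddMonoidHom.id_apply]
    rw [cofaceDiff_single, map_sum,
      Finset.sum_congr rfl fun k _ => map_zsmul (contractS ιQ ugp (n+1)) _ _,
      Fin.sum_univ_succ, Fin.sum_univ_succ,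
      cofaceMap_zero, cofaceMap_succ, contractS_single, contractS_single,
      contractS_single]
    dsimp only
    simp only [cofaceMap_succ, contractS_single, sum_insertNth, tail_insertNth_succ,
      zero_add, Fin.sum_cons, sub_add_cancel, Fin.tail_cons, Fin.insertNth_zero',
      Fin.val_succ, Fin.val_zero, pow_zero, pow_one, one_smul, zero_add, neg_smul,
      eq_self_iff_true, if_true]
    by_cases hc : (∑ i, v i) = QuotientAddGroup.mk' ugp.range (ιQ x)
    · simp only [if_pos hc]
      have htail : (∑ i, Fin.tail v i) = ∑ i : Fin n, v i.succ :=
        Finset.sum_congr rfl fun i _ => rfl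
      have hv0 : QuotientAddGroup.mk' ugp.range (ιQ x) - ∑ i, Fin.tail v i = v 0 := by
        rw [← hc, Fin.sum_univ_succ, htail]
        exact add_sub_cancel_right _ _
      have hB : cofaceDiff ιQ ugp n
          (Finsupp.single ((x, Fin.tail v) : Q × (Fin n → GQ ⧸ ugp.range)) 1) =
          Finsupp.single ((x, v) : Q × (Fin (n+1) → GQ ⧸ ugp.range)) 1 +
          ∑ t : Fin (n+1), ((-1 : ℤ) ^ ((t : ℕ) + 1)) •
            Finsupp.single ((x, Fin.insertNth t 0 (Fin.tail v)) :
              Q × (Fin (n+1) → GQ ⧸ ugp.range)) 1 := by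
        rw [cofaceDiff_single, Fin.sum_univ_succ, cofaceMap_zero]
        dsimp only
        rw [hv0, show (Fin.cons (v 0) (Fin.tail v) : Fin (n+1) → GQ ⧸ ugp.range) = v from
          Fin.cons_self_tail v]
        simp only [cofaceMap_succ, Fin.val_succ, Fin.val_zero, pow_zero, one_smul]
      rw [hB]
      have key : (∑ t : Fin (n+1), ((-1:ℤ)^((t:ℕ)+1+1)) •
            Finsupp.single ((x, Fin.insertNth t 0 (Fin.tail v)) :
              Q × (Fin (n+1) → GQ ⧸ ugp.range)) (1:ℤ)) +
          (∑ t : Fin (n+1), ((-1:ℤ)^((t:ℕ)+1)) •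
            Finsupp.single ((x, Fin.insertNth t 0 (Fin.tail v)) :
              Q × (Fin (n+1) → GQ ⧸ ugp.range)) (1:ℤ)) = 0 := by
        rw [← Finset.sum_add_distrib]
        refine Finset.sum_eq_zero fun t _ => ?_
        rw [← add_smul]
        have hz : ((-1 : ℤ) ^ ((t:ℕ)+1+1) + (-1 : ℤ) ^ ((t:ℕ)+1)) = 0 := by ring
        rw [hz, zero_smul]
      have final : (∑ t : Fin (n+1), ((-1:ℤ)^((t:ℕ)+1+1)) •
            Finsupp.single ((x, Fin.insertNth t 0 (Fin.tail v)) :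
              Q × (Fin (n+1) → GQ ⧸ ugp.range)) (1:ℤ)) +
          (∑ t : Fin (n+1), ((-1:ℤ)^((t:ℕ)+1)) •
            Finsupp.single ((x, Fin.insertNth t 0 (Fin.tail v)) :
              Q × (Fin (n+1) → GQ ⧸ ugp.range)) (1:ℤ)) +
          Finsupp.single ((x, v) : Q × (Fin (n+1) → GQ ⧸ ugp.range)) (1:ℤ) =
          Finsupp.single ((x, v) : Q × (Fin (n+1) → GQ ⧸ ugp.range)) (1:ℤ) := by
        rw [key, zero_add]
      refine Eq.trans ?_ final
      abel
    · simp only [if_neg hc, smul_zero, Finset.sum_const_zero, add_zero, map_zero]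
      abel


end
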